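/- Let ι be a countable type, D : ι → ℝ a function, and let ε > 0, c > 0, C > 0 and m ∈ ℕ be such that D i ≥ ε for all i ∈ ι and, for every R > 0, the set {i ∈ ι : D i ≤ R} has at most C·e^{cR} elements. Then there exist constants C' > 0 and c' > 0 such that for all t with 0 < t ≤ 1, Σ_{i∈ι} t^{-m/2}·exp(−(D i)²/(4t)) ≤ C'·exp(−c'/t) (in particular the series converges). -/
import Mathlib


private lemma pow_div_factorial_le_exp' (y : ℝ) (hy : 0 ≤ y) (m : ℕ) :
    y ^ m / m.factorial ≤ Real.exp y := by
  calc y ^ m / m.factorial ≤ ∑ i ∈ Finset.range (m + 1), y ^ i / i.factorial :=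
        Finset.single_le_sum (f := fun i => y ^ i / i.factorial) (fun i _ => by positivity)
          (Finset.self_mem_range_succ m)
    _ ≤ Real.exp y := Real.sum_le_exp_of_nonneg hy _

/-- If `D : ι → ℝ` is bounded below by `ε > 0` and satisfies the exponential counting bound
`#{i : D i ≤ R} ≤ C·e^{cR}`, then there are `C', c' > 0` such that for `0 < t ≤ 1`,
`Σ_i t^{-m/2}·exp(−(D i)²/(4t)) ≤ C'·exp(−c'/t)` (and the series converges). -/
theorem gaussian_sum_exponential_decay
    {ι : Type*} [Countable ι] (D : ι → ℝ) (ε c C : ℝ) (m : ℕ)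
    (hε : 0 < ε) (hc : 0 < c) (hC : 0 < C)
    (hD : ∀ i, ε ≤ D i)
    (hcount : ∀ R : ℝ, 0 < R → {i : ι | D i ≤ R}.Finite ∧
      (Nat.card {i : ι | D i ≤ R} : ℝ) ≤ C * Real.exp (c * R)) :
    ∃ C' > (0 : ℝ), ∃ c' > (0 : ℝ), ∀ t : ℝ, 0 < t → t ≤ 1 →
      Summable (fun i : ι => t ^ (-(m : ℝ) / 2) * Real.exp (-(D i) ^ 2 / (4 * t))) ∧
      ∑' i : ι, t ^ (-(m : ℝ) / 2) * Real.exp (-(D i) ^ 2 / (4 * t)) ≤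
        C' * Real.exp (-c' / t) := by
  classical
  -- the shell bound sequence
  set g : ℕ → ℝ := fun n => C * Real.exp (c * (ε + n + 1)) * Real.exp (-(ε + n) ^ 2 / 8)
    with hgdef
  have hgpos : ∀ n, 0 < g n := fun n => by positivity
  -- summability of g, by comparison with a geometric series
  set B : ℝ := c * (ε + 1) + 2 * (c + 1) ^ 2 with hBdef
  have hgsum : Summable g := by
    have hle : ∀ n : ℕ, g n ≤ (C * Real.exp B) * Real.exp (-(n : ℝ)) := by
      intro n
      show C * Real.exp (c * (ε + (n : ℝ) + 1)) * Real.exp (-(ε + (n : ℝ)) ^ 2 / 8) ≤ _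
      rw [mul_assoc, ← Real.exp_add, mul_assoc, ← Real.exp_add]
      refine mul_le_mul_of_nonneg_left (Real.exp_le_exp.mpr ?_) hC.le
      have hn : (0 : ℝ) ≤ (n : ℝ) := Nat.cast_nonneg n
      nlinarith [sq_nonneg ((ε + n) - 4 * (c + 1)), sq_nonneg (ε + n), hε.le, hc.le]
    exact Summable.of_nonneg_of_le (fun n => (hgpos n).le) hle
      (Real.summable_exp_neg_nat.mul_left _)
  set K : ℝ := ∑' n, g n with hKdef
  have hK : 0 < K := Summable.tsum_pos hgsum (fun n => (hgpos n).le) 0 (hgpos 0)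
  -- the key finite-sum bound
  have key : ∀ s : Finset ι, ∑ i ∈ s, Real.exp (-(D i) ^ 2 / 8) ≤ K := by
    intro s
    have h1 : ∑ i ∈ s, Real.exp (-(D i) ^ 2 / 8)
        ≤ ∑ i ∈ s, Real.exp (-(ε + (⌊D i - ε⌋₊ : ℝ)) ^ 2 / 8) := by
      refine Finset.sum_le_sum fun i _ => ?_
      refine Real.exp_le_exp.mpr ?_
      have h0 : (0 : ℝ) ≤ D i - ε := by linarith [hD i]
      have hfl : (⌊D i - ε⌋₊ : ℝ) ≤ D i - ε := Nat.floor_le h0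
      have h2 : (0 : ℝ) ≤ ε + (⌊D i - ε⌋₊ : ℝ) := by positivity
      have : (ε + (⌊D i - ε⌋₊ : ℝ)) ^ 2 ≤ (D i) ^ 2 := by nlinarith [hD i]
      linarith
    have h2 : ∑ i ∈ s, Real.exp (-(ε + (⌊D i - ε⌋₊ : ℝ)) ^ 2 / 8)
        = ∑ k ∈ s.image (fun i => ⌊D i - ε⌋₊),
            ((s.filter fun i => ⌊D i - ε⌋₊ = k).card) • Real.exp (-(ε + (k : ℝ)) ^ 2 / 8) :=
      Finset.sum_comp (fun k : ℕ => Real.exp (-(ε + (k : ℝ)) ^ 2 / 8))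
        (fun i => ⌊D i - ε⌋₊)
    have h3 : ∀ k : ℕ, (((s.filter fun i => ⌊D i - ε⌋₊ = k).card) : ℝ) ≤ C * Real.exp (c * (ε + k + 1)) := by
      intro k
      have hRpos : (0 : ℝ) < ε + k + 1 := by positivity
      obtain ⟨hfin, hcard⟩ := hcount (ε + k + 1) hRpos
      have hsub : {i ∈ s | ⌊D i - ε⌋₊ = k} ⊆ hfin.toFinset := by
        intro i hi
        rw [Finset.mem_filter] at hi
        rw [Set.Finite.mem_toFinset]
        have h0 : (0 : ℝ) ≤ D i - ε := by linarith [hD i]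
        have := Nat.lt_floor_add_one (D i - ε)
        rw [hi.2] at this
        show D i ≤ ε + k + 1
        linarith
      have hcard' : ((s.filter fun i => ⌊D i - ε⌋₊ = k).card) ≤ hfin.toFinset.card :=
        Finset.card_le_card hsub
      have hnat : (hfin.toFinset.card : ℝ) = (Nat.card {i : ι | D i ≤ ε + k + 1} : ℝ) := by
        rw [Nat.card_coe_set_eq, Set.ncard_eq_toFinset_card _ hfin]
      calc (((s.filter fun i => ⌊D i - ε⌋₊ = k).card) : ℝ) ≤ (hfin.toFinset.card : ℝ) := by
            exact_mod_cast hcard'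
        _ = _ := hnat
        _ ≤ C * Real.exp (c * (ε + k + 1)) := hcard
    have h4 : ∑ k ∈ s.image (fun i => ⌊D i - ε⌋₊),
        ((s.filter fun i => ⌊D i - ε⌋₊ = k).card) • Real.exp (-(ε + (k : ℝ)) ^ 2 / 8)
        ≤ ∑ k ∈ s.image (fun i => ⌊D i - ε⌋₊), g k := by
      refine Finset.sum_le_sum fun k _ => ?_
      rw [nsmul_eq_mul, hgdef]
      exact mul_le_mul_of_nonneg_right (h3 k) (Real.exp_pos _).le
    have h5 : ∑ k ∈ s.image (fun i => ⌊D i - ε⌋₊), g k ≤ K :=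
      Summable.sum_le_tsum _ (fun k _ => (hgpos k).le) hgsum
    linarith
  have hsum8 : Summable (fun i : ι => Real.exp (-(D i) ^ 2 / 8)) :=
    summable_of_sum_le (fun i => (Real.exp_pos _).le) key
  have htsum8 : ∑' i : ι, Real.exp (-(D i) ^ 2 / 8) ≤ K := Summable.tsum_le_of_sum_le hsum8 key
  -- the constants
  set a : ℝ := ε ^ 2 / 16 with hadef
  have ha : 0 < a := by positivity
  have hM : (0 : ℝ) < (m.factorial : ℝ) / a ^ m := by positivity
  refine ⟨K * ((m.factorial : ℝ) / a ^ m), by positivity, a, ha, fun t ht0 ht1 => ?_⟩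
  -- pointwise bound
  have hpt : ∀ i : ι, t ^ (-(m : ℝ) / 2) * Real.exp (-(D i) ^ 2 / (4 * t))
      ≤ (t ^ (-(m : ℝ) / 2) * Real.exp (-ε ^ 2 / (8 * t))) * Real.exp (-(D i) ^ 2 / 8) := by
    intro i
    rw [mul_assoc, ← Real.exp_add]
    refine mul_le_mul_of_nonneg_left (Real.exp_le_exp.mpr ?_) (Real.rpow_pos_of_pos ht0 _).le
    have hD2 : ε ^ 2 ≤ (D i) ^ 2 := by nlinarith [hD i]
    rw [div_add_div _ _ (by positivity : (8 * t : ℝ) ≠ 0) (by norm_num : (8 : ℝ) ≠ 0),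
      div_le_div_iff₀ (by positivity) (by positivity)]
    nlinarith [sq_nonneg (D i), mul_pos ht0 ht0, mul_le_of_le_one_right (sq_nonneg (D i)) ht1]
  have hsummand_nonneg : ∀ i : ι,
      0 ≤ t ^ (-(m : ℝ) / 2) * Real.exp (-(D i) ^ 2 / (4 * t)) := fun i => by positivity
  have hbsum : Summable (fun i : ι =>
      (t ^ (-(m : ℝ) / 2) * Real.exp (-ε ^ 2 / (8 * t))) * Real.exp (-(D i) ^ 2 / 8)) :=
    hsum8.mul_left _
  have hsumt : Summable (fun i : ι => t ^ (-(m : ℝ) / 2) * Real.exp (-(D i) ^ 2 / (4 * t))) :=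
    Summable.of_nonneg_of_le hsummand_nonneg hpt hbsum
  refine ⟨hsumt, ?_⟩
  have hfac : t ^ (-(m : ℝ) / 2) * Real.exp (-a / t) ≤ (m.factorial : ℝ) / a ^ m := by
    have hstep1 : t ^ (-(m : ℝ) / 2) ≤ t ^ (-(m : ℝ)) :=
      Real.rpow_le_rpow_of_exponent_ge ht0 ht1 (by
        have : (0 : ℝ) ≤ (m : ℝ) := Nat.cast_nonneg m
        linarith)
    have hstep2 : t ^ (-(m : ℝ)) = (t⁻¹) ^ m := by
      rw [Real.rpow_neg ht0.le, Real.rpow_natCast, inv_pow]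
    have hx : (0 : ℝ) < t⁻¹ := inv_pos.mpr ht0
    have hlem : (a * t⁻¹) ^ m / (m.factorial : ℝ) ≤ Real.exp (a * t⁻¹) :=
      pow_div_factorial_le_exp' _ (by positivity) m
    have hat : -a / t = -(a * t⁻¹) := by ring
    have hfin : (t⁻¹) ^ m * Real.exp (-(a * t⁻¹)) ≤ (m.factorial : ℝ) / a ^ m := by
      rw [Real.exp_neg, mul_inv_le_iff₀ (Real.exp_pos _)]
      calc (t⁻¹) ^ m = ((m.factorial : ℝ) / a ^ m) * ((a * t⁻¹) ^ m / (m.factorial : ℝ)) := by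
            rw [mul_pow]
            field_simp
        _ ≤ ((m.factorial : ℝ) / a ^ m) * Real.exp (a * t⁻¹) :=
            mul_le_mul_of_nonneg_left hlem hM.le
    calc t ^ (-(m : ℝ) / 2) * Real.exp (-a / t)
        ≤ t ^ (-(m : ℝ)) * Real.exp (-a / t) :=
          mul_le_mul_of_nonneg_right hstep1 (Real.exp_pos _).le
      _ = (t⁻¹) ^ m * Real.exp (-(a * t⁻¹)) := by rw [hstep2, hat]
      _ ≤ (m.factorial : ℝ) / a ^ m := hfin
  calc ∑' i : ι, t ^ (-(m : ℝ) / 2) * Real.exp (-(D i) ^ 2 / (4 * t))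
      ≤ ∑' i : ι, (t ^ (-(m : ℝ) / 2) * Real.exp (-ε ^ 2 / (8 * t))) * Real.exp (-(D i) ^ 2 / 8) :=
        Summable.tsum_le_tsum hpt hsumt hbsum
    _ = (t ^ (-(m : ℝ) / 2) * Real.exp (-ε ^ 2 / (8 * t))) * ∑' i : ι, Real.exp (-(D i) ^ 2 / 8) :=
        tsum_mul_left
    _ ≤ (t ^ (-(m : ℝ) / 2) * Real.exp (-ε ^ 2 / (8 * t))) * K := by
        refine mul_le_mul_of_nonneg_left htsum8 (by positivity)
    _ = (t ^ (-(m : ℝ) / 2) * Real.exp (-a / t)) * Real.exp (-a / t) * K := by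
        have hsplit : Real.exp (-ε ^ 2 / (8 * t)) = Real.exp (-a / t) * Real.exp (-a / t) := by
          rw [← Real.exp_add, hadef]
          congr 1
          field_simp
          ring
        rw [hsplit]
        ring
    _ ≤ ((m.factorial : ℝ) / a ^ m) * Real.exp (-a / t) * K := by
        refine mul_le_mul_of_nonneg_right
          (mul_le_mul_of_nonneg_right hfac (Real.exp_pos _).le) hK.le
    _ = K * ((m.factorial : ℝ) / a ^ m) * Real.exp (-a / t) := by ring
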